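/- If U and V are commutative languages over a finite alphabet Σ, each recognized by an aperiodic DFA, then the shuffle U ⧢ V is recognized by an aperiodic DFA; i.e., the shuffle of two commutative aperiodic (star-free) languages is aperiodic (star-free). -/

import Mathlib

open List

def IsCommutativeLang {α : Type} (L : Language α) : Prop :=
  ∀ u v : List α, u ~ v → (u ∈ L ↔ v ∈ L)

def UpClosure {α : Type} (L : Language α) : Language α :=
  {v | ∃ u ∈ L, u <+ v}

def DownClosure {α : Type} (L : Language α) : Language α :=
  {u | ∃ v ∈ L, u <+ v}

def UpInterior {α : Type} (L : Language α) : Language α :=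
  {w | ∃ U : Language α, (∀ x ∈ U, x ∈ L) ∧ UpClosure U = U ∧ w ∈ U}

def DownInterior {α : Type} (L : Language α) : Language α :=
  {w | ∃ U : Language α, (∀ x ∈ U, x ∈ L) ∧ DownClosure U = U ∧ w ∈ U}

def RecognizedBy {α : Type} (L : Language α) (n : ℕ) : Prop :=
  ∃ (σ : Type) (_ : Fintype σ) (M : DFA α σ), Fintype.card σ = n ∧ M.accepts = L

noncomputable def sc {α : Type} (L : Language α) : ℕ :=
  sInf {n | RecognizedBy L n}

def Nerode {α : Type} (L : Language α) (u v : List α) : Prop :=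
  ∀ x : List α, u ++ x ∈ L ↔ v ++ x ∈ L

inductive IsShuffle {α : Type} : List α → List α → List α → Prop
  | nil : IsShuffle [] [] []
  | left (x : α) {u v w : List α} : IsShuffle u v w → IsShuffle (x :: u) v (x :: w)
  | right (y : α) {u v w : List α} : IsShuffle u v w → IsShuffle u (y :: v) (y :: w)

def Shuffle {α : Type} (U V : Language α) : Language α :=
  {w | ∃ u ∈ U, ∃ v ∈ V, IsShuffle u v w}

def IsPermDFA {α σ : Type} (M : DFA α σ) : Prop :=
  ∀ a : α, Function.Bijective fun q => M.step q a

def IsGroupLang {α : Type} (L : Language α) : Prop :=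
  ∃ (σ : Type) (_ : Fintype σ) (M : DFA α σ), IsPermDFA M ∧ M.accepts = L

def wpow {α : Type} (w : List α) (n : ℕ) : List α :=
  (List.replicate n w).flatten

def IsAperiodicDFA {α σ : Type} (M : DFA α σ) : Prop :=
  ∀ (q : σ) (w : List α) (n : ℕ), 1 ≤ n → M.evalFrom q (wpow w n) = q → M.evalFrom q w = q

def IsAperiodicLang {α : Type} (L : Language α) : Prop :=
  ∃ (σ : Type) (_ : Fintype σ) (M : DFA α σ), IsAperiodicDFA M ∧ M.accepts = L

def ShuffleList {α : Type} : List (Language α) → Language α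
  | [] => {([] : List α)}
  | L :: Ls => Shuffle L (ShuffleList Ls)

def UnaryGroupLang {α : Type} (a : α) (U : Language α) : Prop :=
  (∀ w ∈ U, ∀ x ∈ w, x = a) ∧
  ∃ (σ : Type) (_ : Fintype σ) (M : DFA Unit σ), IsPermDFA M ∧
    ∀ n : ℕ, (List.replicate n a ∈ U ↔ List.replicate n () ∈ M.accepts)

def UnaryAperiodicLang {α : Type} (a : α) (U : Language α) : Prop :=
  (∀ w ∈ U, ∀ x ∈ w, x = a) ∧
  ∃ (σ : Type) (_ : Fintype σ) (M : DFA Unit σ), IsAperiodicDFA M ∧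
    ∀ n : ℕ, (List.replicate n a ∈ U ↔ List.replicate n () ∈ M.accepts)

set_option linter.unusedSectionVars false

section Aux

variable {α : Type} [DecidableEq α]

def ofCounts (l : List α) (f : α → ℕ) : List α :=
  l.flatMap fun a => List.replicate (f a) a

lemma count_ofCounts {l : List α} (hl : l.Nodup) (f : α → ℕ) (a : α) :
    (ofCounts l f).count a = if a ∈ l then f a else 0 := by
  induction l with
  | nil => simp [ofCounts]
  | cons b l ih =>
    rcases List.nodup_cons.mp hl with ⟨hb, hl'⟩
    simp only [ofCounts, List.flatMap_cons, List.count_append] at *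
    rw [ih hl', List.count_replicate]
    by_cases hab : a = b
    · subst hab; simp [hb]
    · simp [hab, Ne.symm hab]

lemma wpow_singleton (a : α) (m : ℕ) : wpow [a] m = List.replicate m a := by
  induction m with
  | zero => rfl
  | succ n ih =>
    show (List.replicate (n+1) [a]).flatten = _
    rw [List.replicate_succ, List.flatten_cons, List.replicate_succ]
    exact congrArg (a :: ·) ih

lemma count_wpow (w : List α) (n : ℕ) (b : α) : (wpow w n).count b = n * w.count b := by
  induction n with
  | zero => simp [wpow]
  | succ n ih =>
    show ((List.replicate (n+1) w).flatten).count b = _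
    rw [List.replicate_succ, List.flatten_cons, List.count_append]
    show _ + (wpow w n).count b = _
    rw [ih]; ring

variable {σ : Type} [Fintype σ]

lemma evalFrom_replicate_fix (M : DFA α σ) {p : σ} {a : α} (h : M.step p a = p) (k : ℕ) :
    M.evalFrom p (List.replicate k a) = p := by
  induction k with
  | zero => rfl
  | succ n ih =>
    rw [List.replicate_succ]
    show M.evalFrom (M.step p a) (List.replicate n a) = p
    rw [h]; exact ih

lemma evalFrom_replicate_clip (M : DFA α σ) (hM : IsAperiodicDFA M) (q : σ) (a : α)
    {c : ℕ} (hc : Fintype.card σ ≤ c) :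
    M.evalFrom q (List.replicate c a) = M.evalFrom q (List.replicate (Fintype.card σ) a) := by
  set N := Fintype.card σ with hN
  have hpig : ∃ i j : ℕ, i < j ∧ j ≤ N ∧
      M.evalFrom q (List.replicate i a) = M.evalFrom q (List.replicate j a) := by
    obtain ⟨i, j, hij, heq⟩ := Fintype.exists_ne_map_eq_of_card_lt
      (fun i : Fin (N+1) => M.evalFrom q (List.replicate i a)) (by simp; omega)
    rcases Nat.lt_or_ge (i : ℕ) (j : ℕ) with h | h
    · exact ⟨i, j, h, Nat.lt_succ_iff.mp j.isLt, heq⟩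
    · have h' : (j : ℕ) < i := lt_of_le_of_ne h (fun e => hij (Fin.ext e.symm))
      exact ⟨j, i, h', Nat.lt_succ_iff.mp i.isLt, heq.symm⟩
  obtain ⟨i, j, hij, hjN, heq⟩ := hpig
  set p := M.evalFrom q (List.replicate i a) with hp
  have hsplit : ∀ m, i ≤ m →
      M.evalFrom q (List.replicate m a) = M.evalFrom p (List.replicate (m - i) a) := by
    intro m hm
    conv_lhs => rw [show m = i + (m - i) by omega]
    rw [List.replicate_add, DFA.evalFrom_of_append, hp]
  have hcyc : M.evalFrom p (List.replicate (j - i) a) = p := by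
    rw [← hsplit j (le_of_lt hij)]; exact heq.symm
  have hstep : M.step p a = p := by
    have := hM p [a] (j - i) (by omega) (by rw [wpow_singleton]; exact hcyc)
    exact this
  rw [hsplit c (by omega), hsplit N (by omega),
      evalFrom_replicate_fix M hstep, evalFrom_replicate_fix M hstep]

lemma evalFrom_ofCounts_clip (M : DFA α σ) (hM : IsAperiodicDFA M)
    (l : List α) (f : α → ℕ) (q : σ) :
    M.evalFrom q (ofCounts l f)
      = M.evalFrom q (ofCounts l (fun a => min (f a) (Fintype.card σ))) := by
  induction l generalizing q with
  | nil => rfl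
  | cons b l ih =>
    simp only [ofCounts, List.flatMap_cons] at *
    rw [DFA.evalFrom_of_append, DFA.evalFrom_of_append]
    have hb : M.evalFrom q (List.replicate (f b) b)
        = M.evalFrom q (List.replicate (min (f b) (Fintype.card σ)) b) := by
      rcases Nat.le_total (Fintype.card σ) (f b) with h | h
      · rw [evalFrom_replicate_clip M hM q b h, Nat.min_eq_right h]
      · rw [Nat.min_eq_left h]
    rw [hb, ih]



variable [Fintype α]

-- language level
variable [Fintype α]

lemma count_univ_ofCounts (f : α → ℕ) (a : α) :
    (ofCounts Finset.univ.toList f).count a = f a := by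
  rw [count_ofCounts Finset.univ.nodup_toList]
  simp [Finset.mem_toList]

lemma perm_ofCounts_count (w : List α) :
    w ~ ofCounts Finset.univ.toList (fun a => w.count a) := by
  rw [List.perm_iff_count]
  intro a
  rw [count_univ_ofCounts]

/-- commutative + aperiodic gives a threshold N -/
lemma exists_threshold (U : Language α) (hcU : IsCommutativeLang U) (haU : IsAperiodicLang U) :
    ∃ N : ℕ, ∀ f g : α → ℕ, (∀ a, min (f a) N = min (g a) N) →
      (ofCounts Finset.univ.toList f ∈ U ↔ ofCounts Finset.univ.toList g ∈ U) := by
  obtain ⟨σ, _, M, hM, hacc⟩ := haU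
  refine ⟨Fintype.card σ, fun f g h => ?_⟩
  have key : ∀ h : α → ℕ, (ofCounts Finset.univ.toList h ∈ U ↔
      M.evalFrom M.start (ofCounts Finset.univ.toList
        (fun a => min (h a) (Fintype.card σ))) ∈ M.accept) := by
    intro h
    rw [← hacc, DFA.mem_accepts]
    show M.evalFrom M.start _ ∈ _ ↔ _
    rw [evalFrom_ofCounts_clip M hM]
  rw [key f, key g]
  have : (fun a => min (f a) (Fintype.card σ)) = (fun a => min (g a) (Fintype.card σ)) :=
    funext h
  rw [this]

lemma isShuffle_count {u v w : List α} (h : IsShuffle u v w) (a : α) :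
    w.count a = u.count a + v.count a := by
  induction h with
  | nil => simp
  | left x h ih => simp only [List.count_cons, ih]; omega
  | right y h ih => simp only [List.count_cons, ih]; omega

lemma exists_shuffle_split (w : List α) (f g : α → ℕ)
    (h : ∀ a, f a + g a = w.count a) :
    ∃ u v : List α, IsShuffle u v w ∧ (∀ a, u.count a = f a) ∧ (∀ a, v.count a = g a) := by
  induction w generalizing f g with
  | nil =>
    refine ⟨[], [], IsShuffle.nil, fun a => ?_, fun a => ?_⟩ <;>
      · have := h a; simp at this ⊢; omega
  | cons x w ih =>
    have hx := h x
    rw [List.count_cons_self] at hx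
    by_cases hf : 0 < f x
    · obtain ⟨u, v, hs, hu, hv⟩ := ih (fun a => if a = x then f x - 1 else f a) g (by
        intro a
        by_cases hax : a = x
        · subst hax; simp; omega
        · have := h a
          rw [List.count_cons_of_ne (Ne.symm hax)] at this
          simpa [hax] using this)
      refine ⟨x :: u, v, IsShuffle.left x hs, fun a => ?_, hv⟩
      by_cases hax : a = x
      · subst hax; rw [List.count_cons_self, hu a]; simp; omega
      · rw [List.count_cons_of_ne (Ne.symm hax), hu a]; simp [hax]
    · have hg : 0 < g x := by omega
      obtain ⟨u, v, hs, hu, hv⟩ := ih f (fun a => if a = x then g x - 1 else g a) (by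
        intro a
        by_cases hax : a = x
        · subst hax; simp; omega
        · have := h a
          rw [List.count_cons_of_ne (Ne.symm hax)] at this
          simpa [hax] using this)
      refine ⟨u, x :: v, IsShuffle.right x hs, hu, fun a => ?_⟩
      by_cases hax : a = x
      · subst hax; rw [List.count_cons_self, hv a]; simp; omega
      · rw [List.count_cons_of_ne (Ne.symm hax), hv a]; simp [hax]

lemma mem_shuffle_iff {U V : Language α} (hcU : IsCommutativeLang U)
    (hcV : IsCommutativeLang V) (w : List α) :
    w ∈ Shuffle U V ↔ ∃ f g : α → ℕ, (∀ a, f a + g a = w.count a) ∧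
      ofCounts Finset.univ.toList f ∈ U ∧ ofCounts Finset.univ.toList g ∈ V := by
  constructor
  · rintro ⟨u, hu, v, hv, hs⟩
    refine ⟨fun a => u.count a, fun a => v.count a,
      fun a => (isShuffle_count hs a).symm, ?_, ?_⟩
    · exact (hcU u _ (perm_ofCounts_count u)).mp hu
    · exact (hcV v _ (perm_ofCounts_count v)).mp hv
  · rintro ⟨f, g, hsum, hfU, hgV⟩
    obtain ⟨u, v, hs, hu, hv⟩ := exists_shuffle_split w f g hsum
    refine ⟨u, ?_, v, ?_, hs⟩
    · refine (hcU _ u ?_).mp hfU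
      rw [List.perm_iff_count]; intro a; rw [count_univ_ofCounts, hu a]
    · refine (hcV _ v ?_).mp hgV
      rw [List.perm_iff_count]; intro a; rw [count_univ_ofCounts, hv a]

/-- pointwise adjustment -/
lemma split_adjust {cU cV c c' fa ga : ℕ} (hsum : fa + ga = c)
    (hmin : min c (cU + cV) = min c' (cU + cV)) :
    ∃ p : ℕ × ℕ, p.1 + p.2 = c' ∧ min p.1 cU = min fa cU ∧ min p.2 cV = min ga cV := by
  by_cases hcc : c' = c
  · exact ⟨(fa, ga), by omega, rfl, rfl⟩
  · have hT : cU + cV ≤ c ∧ cU + cV ≤ c' := by omega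
    by_cases hf : cU ≤ fa
    · refine ⟨(c' - min ga cV, min ga cV), by omega, by omega, by omega⟩
    · refine ⟨(fa, c' - fa), by omega, by omega, by omega⟩

lemma shuffle_clip_aux {U V : Language α} (hcU : IsCommutativeLang U)
    (hcV : IsCommutativeLang V) {NU NV : ℕ}
    (hU : ∀ f g : α → ℕ, (∀ a, min (f a) NU = min (g a) NU) →
      (ofCounts Finset.univ.toList f ∈ U ↔ ofCounts Finset.univ.toList g ∈ U))
    (hV : ∀ f g : α → ℕ, (∀ a, min (f a) NV = min (g a) NV) →
      (ofCounts Finset.univ.toList f ∈ V ↔ ofCounts Finset.univ.toList g ∈ V))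
    (w w' : List α)
    (h : ∀ a, min (w.count a) (NU + NV) = min (w'.count a) (NU + NV)) :
    w ∈ Shuffle U V → w' ∈ Shuffle U V := by
  rw [mem_shuffle_iff hcU hcV, mem_shuffle_iff hcU hcV]
  rintro ⟨f, g, hsum, hfU, hgV⟩
  have hch : ∀ a, ∃ p : ℕ × ℕ, p.1 + p.2 = w'.count a ∧
      min p.1 NU = min (f a) NU ∧ min p.2 NV = min (g a) NV :=
    fun a => split_adjust (hsum a) (h a)
  refine ⟨fun a => (Classical.choose (hch a)).1, fun a => (Classical.choose (hch a)).2,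
    fun a => (Classical.choose_spec (hch a)).1, ?_, ?_⟩
  · exact (hU _ f (fun a => (Classical.choose_spec (hch a)).2.1)).mpr hfU
  · exact (hV _ g (fun a => (Classical.choose_spec (hch a)).2.2)).mpr hgV


/-- the counting DFA with saturation at T -/
def countDFA (T : ℕ) (P : (α → ℕ) → Prop) : DFA α (α → Fin (T+1)) where
  step := fun q x => fun b => ⟨min ((q b).val + (if b = x then 1 else 0)) T, by omega⟩
  start := fun _ => ⟨0, by omega⟩
  accept := {q | P (fun a => (q a).val)}

lemma countDFA_evalFrom (T : ℕ) (P : (α → ℕ) → Prop) (q : α → Fin (T+1)) (w : List α)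
    (b : α) : (((countDFA T P).evalFrom q w) b).val = min ((q b).val + w.count b) T := by
  induction w generalizing q with
  | nil =>
    show (q b).val = _
    have := (q b).isLt
    simp; omega
  | cons x w ih =>
    show ((((countDFA T P)).evalFrom ((countDFA T P).step q x) w) b).val = _
    rw [ih]
    show min (min ((q b).val + _) T + w.count b) T = _
    rw [List.count_cons]
    by_cases hbx : b = x
    · subst hbx; simp; omega
    · simp [hbx, Ne.symm hbx]; omega

lemma countDFA_aperiodic (T : ℕ) (P : (α → ℕ) → Prop) :
    IsAperiodicDFA (countDFA T P) := by
  intro q w n hn hev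
  funext b
  have h1 : (((countDFA T P).evalFrom q (wpow w n)) b).val
      = min ((q b).val + (wpow w n).count b) T := countDFA_evalFrom T P q _ b
  rw [hev, count_wpow] at h1
  apply Fin.ext
  rw [countDFA_evalFrom T P q w b]
  have hlt := (q b).isLt
  rcases Nat.eq_zero_or_pos (w.count b) with h0 | h0
  · omega
  · have : w.count b ≤ n * w.count b := Nat.le_mul_of_pos_left _ hn
    omega

lemma countDFA_accepts (T : ℕ) (P : (α → ℕ) → Prop) (w : List α) :
    w ∈ (countDFA T P).accepts ↔ P (fun a => min (w.count a) T) := by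
  rw [DFA.mem_accepts]
  have heq : (fun a => (((countDFA T P).eval w) a).val)
      = fun a => min (w.count a) T := by
    funext a
    show (((countDFA T P).evalFrom (countDFA T P).start w) a).val = _
    rw [countDFA_evalFrom]
    simp [countDFA]
  show P (fun a => (((countDFA T P).eval w) a).val) ↔ _
  rw [heq]


end Aux

/-- the shuffle of two commutative aperiodic (star-free) languages is
aperiodic. -/
theorem shuffle_aperiodic {α : Type} [Fintype α] (U V : Language α)
    (hcU : IsCommutativeLang U) (hcV : IsCommutativeLang V)
    (haU : IsAperiodicLang U) (haV : IsAperiodicLang V) :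
    IsAperiodicLang (Shuffle U V) := by
  letI : DecidableEq α := Classical.decEq α
  obtain ⟨NU, hU⟩ := exists_threshold U hcU haU
  obtain ⟨NV, hV⟩ := exists_threshold V hcV haV
  refine ⟨α → Fin (NU + NV + 1), inferInstance,
    countDFA (NU + NV) (fun f => ofCounts Finset.univ.toList f ∈ Shuffle U V),
    countDFA_aperiodic _ _, ?_⟩
  ext w
  rw [countDFA_accepts]
  have hcnt : ∀ a : α, (ofCounts Finset.univ.toList
      (fun a => min (w.count a) (NU + NV))).count a = min (w.count a) (NU + NV) :=
    fun a => count_univ_ofCounts _ a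
  constructor
  · intro hmem
    exact shuffle_clip_aux hcU hcV hU hV _ w (fun a => by rw [hcnt a]; omega) hmem
  · intro hmem
    exact shuffle_clip_aux hcU hcV hU hV w _ (fun a => by rw [hcnt a]; omega) hmem
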